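/- For d ≥ 5 and t > 0, the function M(z)² = |z|²·∫_{ℝ^d} e^{−2t|ξ|²}/|1 − z·e^{−t|ξ|²}|² dξ is uniformly bounded on the open unit disk: sup_{|z|<1} M(z) < ∞. -/

import Mathlib

open MeasureTheory Real Complex

private lemma exp_ratio_bound {x : ℝ} (hx : 0 < x) :
    Real.exp (-x) * Real.exp (-x) / (1 - Real.exp (-x)) ^ 2
      ≤ Real.exp (-x) / x ^ 2 := by
  have e1 : Real.exp (-(x/2)) * Real.exp (x/2) = 1 := by
    rw [← Real.exp_add]; simp
  have e2 : Real.exp (-(x/2)) * Real.exp (-(x/2)) = Real.exp (-x) := by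
    rw [← Real.exp_add]; ring_nf
  have hs : x / 2 < Real.sinh (x / 2) := Real.self_lt_sinh_iff.mpr (by linarith)
  have hsinh : Real.sinh (x/2) = (Real.exp (x/2) - Real.exp (-(x/2))) / 2 := Real.sinh_eq _
  have hp : 0 < Real.exp (-(x/2)) := Real.exp_pos _
  have key : x * Real.exp (-(x/2)) ≤ 1 - Real.exp (-x) := by
    nlinarith [hs, hsinh, e1, e2, hp]
  have hkey0 : 0 < x * Real.exp (-(x/2)) := by positivity
  have h1w : 0 < 1 - Real.exp (-x) := lt_of_lt_of_le hkey0 key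
  calc Real.exp (-x) * Real.exp (-x) / (1 - Real.exp (-x)) ^ 2
      ≤ Real.exp (-x) * Real.exp (-x) / (x * Real.exp (-(x/2))) ^ 2 := by
        apply div_le_div_of_nonneg_left (by positivity) (by positivity)
        exact pow_le_pow_left₀ hkey0.le key 2
    _ = Real.exp (-x) / x ^ 2 := by
        rw [mul_pow, ← e2]
        field_simp

private lemma pointwise_bound {t : ℝ} (ht : 0 < t) {z : ℂ} (hz : ‖z‖ < 1)
    {n : ℝ} (hn : 0 < n) :
    Real.exp (-2 * t * n) / ‖(1 - z * (Real.exp (-t * n) : ℂ))‖ ^ 2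
      ≤ Real.exp (-(t * n)) / (t * n) ^ 2 := by
  set x := t * n with hxdef
  have hx0 : 0 < x := mul_pos ht hn
  have hw1 : Real.exp (-x) < 1 := Real.exp_lt_one_iff.mpr (by linarith)
  have hw0 : 0 < Real.exp (-x) := Real.exp_pos _
  have h1w : 0 < 1 - Real.exp (-x) := by linarith
  have hxn : -t * n = -x := by rw [hxdef]; ring
  have habs : 1 - Real.exp (-x) ≤ ‖(1 - z * (Real.exp (-t * n) : ℂ))‖ := by
    rw [hxn]
    have h1 : ‖z * (Real.exp (-x) : ℂ)‖ ≤ Real.exp (-x) := by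
      rw [norm_mul, Complex.norm_real, Real.norm_of_nonneg hw0.le]
      nlinarith [norm_nonneg z]
    have h2 := norm_sub_norm_le (1 : ℂ) (z * (Real.exp (-x) : ℂ))
    simp only [norm_one] at h2
    linarith
  have hexp2 : Real.exp (-2 * t * n) = Real.exp (-x) * Real.exp (-x) := by
    rw [← Real.exp_add]; congr 1; rw [hxdef]; ring
  calc Real.exp (-2 * t * n) / ‖(1 - z * (Real.exp (-t * n) : ℂ))‖ ^ 2
      ≤ Real.exp (-2 * t * n) / (1 - Real.exp (-x)) ^ 2 := by
        apply div_le_div_of_nonneg_left (Real.exp_pos _).le (by positivity)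
        exact pow_le_pow_left₀ h1w.le habs 2
    _ = Real.exp (-x) * Real.exp (-x) / (1 - Real.exp (-x)) ^ 2 := by rw [hexp2]
    _ ≤ Real.exp (-x) / x ^ 2 := exp_ratio_bound hx0

private lemma h_integrable (d : ℕ) (hd : 5 ≤ d) {t : ℝ} (ht : 0 < t) :
    Integrable (fun y : ℝ => ((y ^ 2) ^ (-(2 : ℝ) / d)) * Real.exp (-t * y ^ 2)) := by
  have hd4 : (4 : ℝ) < d := by exact_mod_cast lt_of_lt_of_le (by norm_num) hd
  have hd0 : (0 : ℝ) < d := by linarith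
  have hexp : (-1 : ℝ) < -4 / d := by
    rw [neg_lt, neg_div, neg_neg]
    rw [div_lt_one hd0]; linarith
  have base : Integrable (fun y : ℝ => y ^ ((-4 : ℝ) / d) * Real.exp (-t * y ^ 2)) :=
    integrable_rpow_mul_exp_neg_mul_sq ht hexp
  have hpos : IntegrableOn (fun y : ℝ => ((y ^ 2) ^ (-(2 : ℝ) / d)) * Real.exp (-t * y ^ 2))
      (Set.Ioi 0) := by
    apply (base.integrableOn).congr_fun ?_ measurableSet_Ioi
    intro y hy
    have hy0 : (0 : ℝ) < y := hy
    dsimp only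
    congr 1
    rw [show (-4 : ℝ) / d = (2 : ℝ) * (-(2 : ℝ) / d) by ring, Real.rpow_mul hy0.le,
      Real.rpow_two]
  rw [← integrableOn_univ, ← Set.Iio_union_Ici (a := (0 : ℝ)), integrableOn_union,
    integrableOn_Ici_iff_integrableOn_Ioi]
  refine ⟨?_, hpos⟩
  rw [← (Measure.measurePreserving_neg (volume : Measure ℝ)).integrableOn_comp_preimage
      (Homeomorph.neg ℝ).measurableEmbedding]
  simp only [Function.comp_def, neg_sq, Set.neg_preimage, Set.neg_Iio, neg_neg, neg_zero]
  exact hpos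

private lemma sum_bound (d : ℕ) (hd : 5 ≤ d) {t : ℝ} (ht : 0 < t) (ξ : Fin d → ℝ)
    (hξ : ∀ i, ξ i ≠ 0) :
    Real.exp (-(t * ∑ i, ξ i ^ 2)) / (t * ∑ i, ξ i ^ 2) ^ 2 ≤
      (t ^ 2 * (d : ℝ) ^ 2)⁻¹ *
        ∏ i, ((ξ i ^ 2) ^ (-(2 : ℝ) / d)) * Real.exp (-t * ξ i ^ 2) := by
  have hd0 : (0 : ℝ) < d := by
    have : (5:ℝ) ≤ d := by exact_mod_cast hd
    linarith
  set S : ℝ := ∑ i, ξ i ^ 2 with hSdef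
  have hsq : ∀ i, 0 < ξ i ^ 2 := fun i =>
    lt_of_le_of_ne (sq_nonneg _) (Ne.symm (pow_ne_zero 2 (hξ i)))
  have hS : 0 < S := by
    have : Nonempty (Fin d) := ⟨⟨0, by omega⟩⟩
    exact Finset.sum_pos (fun i _ => hsq i) Finset.univ_nonempty
  set P : ℝ := ∏ i, ((ξ i ^ 2) ^ ((1 : ℝ) / d)) with hPdef
  have hP : 0 < P := Finset.prod_pos fun i _ => Real.rpow_pos_of_pos (hsq i) _
  have hamgm : P ≤ (1 / d) * S := by
    have := Real.geom_mean_le_arith_mean_weighted Finset.univ (fun _ => 1 / (d : ℝ))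
      (fun i => ξ i ^ 2) (fun i _ => by positivity)
      (by simp [Finset.sum_const]; field_simp) (fun i _ => (hsq i).le)
    simpa [hPdef, hSdef, Finset.mul_sum] using this
  have hdP : (d : ℝ) * P ≤ S := by
    have h2 := mul_le_mul_of_nonneg_left hamgm hd0.le
    calc (d : ℝ) * P ≤ (d : ℝ) * ((1 / d) * S) := h2
      _ = S := by field_simp
  have hprod : (∏ i, ((ξ i ^ 2) ^ (-(2 : ℝ) / d)) * Real.exp (-t * ξ i ^ 2))
      = (P ^ 2)⁻¹ * Real.exp (-(t * S)) := by
    rw [Finset.prod_mul_distrib]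
    congr 1
    · have heq : ∀ i ∈ Finset.univ, ((ξ i ^ 2 : ℝ)) ^ (-(2 : ℝ) / d)
          = (((ξ i ^ 2) ^ ((1 : ℝ) / d))) ^ (-2 : ℝ) := fun i _ => by
        rw [← Real.rpow_mul (sq_nonneg _)]
        congr 1; ring
      rw [Finset.prod_congr rfl heq,
        Real.finset_prod_rpow _ _ (fun i _ => Real.rpow_nonneg (sq_nonneg _) _) _]
      rw [show (-2 : ℝ) = -(2 : ℝ) by norm_num, Real.rpow_neg hP.le, Real.rpow_two]
    · rw [← Real.exp_sum]
      congr 1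
      rw [← Finset.mul_sum, ← hSdef]; ring
  calc Real.exp (-(t * S)) / (t * S) ^ 2
      ≤ Real.exp (-(t * S)) / (t * ((d : ℝ) * P)) ^ 2 := by
        apply div_le_div_of_nonneg_left (Real.exp_pos _).le (by positivity)
        apply pow_le_pow_left₀ (by positivity)
        exact mul_le_mul_of_nonneg_left hdP ht.le
    _ = (t ^ 2 * (d : ℝ) ^ 2)⁻¹ * ((P ^ 2)⁻¹ * Real.exp (-(t * S))) := by
        field_simp
    _ = _ := by rw [hprod]

theorem stmt5 (d : ℕ) (hd : 5 ≤ d) (t : ℝ) (ht : 0 < t) :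
    ∃ C : ℝ, ∀ z : ℂ, ‖z‖ < 1 →
      ‖z‖ ^ 2 *
        (∫ ξ : EuclideanSpace ℝ (Fin d),
          Real.exp (-2 * t * ‖ξ‖ ^ 2) /
            ‖(1 - z * (Real.exp (-t * ‖ξ‖ ^ 2) : ℂ))‖ ^ 2) ≤ C := by
  classical
  set G : EuclideanSpace ℝ (Fin d) → ℝ := fun ξ =>
    (t ^ 2 * (d : ℝ) ^ 2)⁻¹ * ∏ i, ((ξ i ^ 2) ^ (-(2 : ℝ) / d)) * Real.exp (-t * ξ i ^ 2)
    with hGdef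
  have hGint : Integrable G := by
    have hpi : Integrable (fun x : Fin d → ℝ =>
        ∏ i, ((x i ^ 2) ^ (-(2 : ℝ) / d)) * Real.exp (-t * x i ^ 2)) :=
      Integrable.fintype_prod
        (f := fun _ : Fin d => fun y => ((y ^ 2) ^ (-(2 : ℝ) / d)) * Real.exp (-t * y ^ 2))
        (fun _ => h_integrable d hd ht)
    have hmp := EuclideanSpace.volume_preserving_symm_measurableEquiv_toLp (Fin d)
    rw [← hmp.integrable_comp_emb (MeasurableEquiv.measurableEmbedding _)] at hpi
    exact hpi.const_mul _
  have hae : ∀ᵐ ξ : EuclideanSpace ℝ (Fin d), ∀ i, ξ i ≠ 0 := by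
    rw [MeasureTheory.ae_all_iff]
    intro i
    have hmp := EuclideanSpace.volume_preserving_symm_measurableEquiv_toLp (Fin d)
    have hs : MeasurableSet {x : Fin d → ℝ | x i = 0} :=
      measurable_pi_apply i (measurableSet_singleton 0)
    have hpre := hmp.measure_preimage hs.nullMeasurableSet
    have hnullpi : (volume : Measure (Fin d → ℝ)) {x | x i = 0} = 0 := by
      rw [volume_pi]; exact Measure.pi_hyperplane _ i 0
    rw [MeasureTheory.ae_iff]
    simp only [not_not]
    have : {ξ : EuclideanSpace ℝ (Fin d) | ξ i = 0} =
        (MeasurableEquiv.toLp 2 (Fin d → ℝ)).symm ⁻¹' {x : Fin d → ℝ | x i = 0} := rfl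
    rw [this, hpre, hnullpi]
  refine ⟨∫ ξ, G ξ, fun z hz => ?_⟩
  have hf_nonneg : ∀ ξ : EuclideanSpace ℝ (Fin d),
      0 ≤ Real.exp (-2 * t * ‖ξ‖ ^ 2) /
        ‖(1 - z * (Real.exp (-t * ‖ξ‖ ^ 2) : ℂ))‖ ^ 2 := fun ξ =>
    div_nonneg (Real.exp_pos _).le (by positivity)
  have hbound : ∀ᵐ ξ : EuclideanSpace ℝ (Fin d),
      Real.exp (-2 * t * ‖ξ‖ ^ 2) /
        ‖(1 - z * (Real.exp (-t * ‖ξ‖ ^ 2) : ℂ))‖ ^ 2 ≤ G ξ := by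
    filter_upwards [hae] with ξ hξ
    have hnS : ‖ξ‖ ^ 2 = ∑ i, ξ i ^ 2 := by
      rw [EuclideanSpace.norm_eq, Real.sq_sqrt (by positivity)]
      simp [Real.norm_eq_abs, sq_abs]
    have hS : 0 < ∑ i, ξ i ^ 2 := by
      have : Nonempty (Fin d) := ⟨⟨0, by omega⟩⟩
      exact Finset.sum_pos
        (fun i _ => lt_of_le_of_ne (sq_nonneg _) (Ne.symm (pow_ne_zero 2 (hξ i))))
        Finset.univ_nonempty
    calc Real.exp (-2 * t * ‖ξ‖ ^ 2) /
          ‖(1 - z * (Real.exp (-t * ‖ξ‖ ^ 2) : ℂ))‖ ^ 2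
        ≤ Real.exp (-(t * ‖ξ‖ ^ 2)) / (t * ‖ξ‖ ^ 2) ^ 2 := by
          apply pointwise_bound ht hz
          rw [hnS]; exact hS
      _ ≤ G ξ := by
          rw [hGdef, hnS]
          exact sum_bound d hd ht ξ hξ
  have hmono := integral_mono_of_nonneg (Filter.Eventually.of_forall hf_nonneg) hGint hbound
  calc ‖z‖ ^ 2 * (∫ ξ : EuclideanSpace ℝ (Fin d),
          Real.exp (-2 * t * ‖ξ‖ ^ 2) /
            ‖(1 - z * (Real.exp (-t * ‖ξ‖ ^ 2) : ℂ))‖ ^ 2)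
      ≤ 1 * (∫ ξ : EuclideanSpace ℝ (Fin d),
          Real.exp (-2 * t * ‖ξ‖ ^ 2) /
            ‖(1 - z * (Real.exp (-t * ‖ξ‖ ^ 2) : ℂ))‖ ^ 2) := by
        apply mul_le_mul_of_nonneg_right _ (integral_nonneg hf_nonneg)
        nlinarith [norm_nonneg z]
    _ = _ := one_mul _
    _ ≤ ∫ ξ, G ξ := hmono
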